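/- A transversal polymatroidal ideal has a unique presentation as a product of powers of distinct monomial prime ideals: if P_{G_1}^{a_1} ⋯ P_{G_s}^{a_s} = P_{H_1}^{b_1} ⋯ P_{H_t}^{b_t} with all a_j, b_j ≥ 1, the G_j pairwise distinct nonempty subsets of [n], and the H_j pairwise distinct nonempty subsets of [n], then s = t and after reindexing G_j = H_j and a_j = b_j for all j. -/

import Mathlib

open MvPolynomial

/-- The monomial prime ideal `P_F = (x_i : i ∈ F)`. -/
noncomputable def PF {K : Type} [Field K] {n : ℕ} (F : Finset (Fin n)) :
    Ideal (MvPolynomial (Fin n) K) :=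
  Ideal.span ((fun i => (X i : MvPolynomial (Fin n) K)) '' ↑F)

section Aux

variable {K : Type} [Field K] {n : ℕ}

lemma X_mem_PF {F : Finset (Fin n)} {i : Fin n} (hi : i ∈ F) :
    (X i : MvPolynomial (Fin n) K) ∈ PF (K := K) F :=
  Ideal.subset_span ⟨i, hi, rfl⟩

lemma PF_mono {F F' : Finset (Fin n)} (h : F ⊆ F') : PF (K := K) F ≤ PF (K := K) F' :=
  Ideal.span_mono (Set.image_mono (by exact_mod_cast h))

lemma prod_ideal_le_prod {ι R : Type*} [CommSemiring R] (s : Finset ι) (I J : ι → Ideal R)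
    (h : ∀ i ∈ s, I i ≤ J i) : ∏ i ∈ s, I i ≤ ∏ i ∈ s, J i := by
  classical
  induction s using Finset.induction_on with
  | empty => simp
  | insert _ _ hx ih =>
      rw [Finset.prod_insert hx, Finset.prod_insert hx]
      exact Ideal.mul_mono (h _ (Finset.mem_insert_self _ _))
        (ih fun i hi => h i (Finset.mem_insert_of_mem hi))

/-- Forward containment: the transversal ideal lies in `P_F ^ (∑_{G j ⊆ F} a j)`. -/
lemma prod_le_pow {s : ℕ} (G : Fin s → Finset (Fin n)) (a : Fin s → ℕ) (F : Finset (Fin n)) :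
    ∏ j, (PF (K := K) (G j)) ^ a j ≤
      PF (K := K) F ^ (∑ j ∈ Finset.univ.filter (fun j => G j ⊆ F), a j) := by
  classical
  set T := Finset.univ.filter (fun j => G j ⊆ F) with hT
  calc ∏ j, (PF (K := K) (G j)) ^ a j
      = (∏ j ∈ T, (PF (K := K) (G j)) ^ a j) * ∏ j ∈ Tᶜ, (PF (K := K) (G j)) ^ a j :=
        (Finset.prod_mul_prod_compl T _).symm
    _ ≤ ∏ j ∈ T, (PF (K := K) (G j)) ^ a j := Ideal.mul_le_left
    _ ≤ ∏ j ∈ T, (PF (K := K) F) ^ a j := by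
        refine prod_ideal_le_prod _ _ _ (fun j hj => ?_)
        exact Ideal.pow_right_mono (PF_mono (by simpa [hT] using hj)) _
    _ = PF (K := K) F ^ ∑ j ∈ T, a j := Finset.prod_pow_eq_pow_sum T a _

/-- Reverse bound: if the transversal ideal lies in `P_F ^ k` then
`k ≤ ∑_{G j ⊆ F} a j`. -/
lemma pow_le_of_prod_le {s : ℕ} (G : Fin s → Finset (Fin n)) (a : Fin s → ℕ)
    (hG : ∀ j, (G j).Nonempty) (F : Finset (Fin n)) (k : ℕ)
    (h : ∏ j, (PF (K := K) (G j)) ^ a j ≤ PF (K := K) F ^ k) :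
    k ≤ ∑ j ∈ Finset.univ.filter (fun j => G j ⊆ F), a j := by
  classical
  set T := Finset.univ.filter (fun j => G j ⊆ F) with hT
  by_contra hk
  push_neg at hk
  -- choose a variable from each `G j`, avoiding `F` whenever possible
  have hg : ∀ j, ∃ g, g ∈ G j ∧ (g ∈ F ↔ G j ⊆ F) := by
    intro j
    by_cases hsub : G j ⊆ F
    · obtain ⟨g, hgmem⟩ := hG j
      exact ⟨g, hgmem, by simp [hsub, hsub hgmem]⟩
    · obtain ⟨g, hgmem⟩ := Finset.sdiff_nonempty.mpr hsub
      rw [Finset.mem_sdiff] at hgmem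
      exact ⟨g, hgmem.1, by simp [hsub, hgmem.2]⟩
  choose g hg1 hg2 using hg
  set m : MvPolynomial (Fin n) K := ∏ j, (X (g j)) ^ a j with hmdef
  have hm : m ∈ ∏ j, (PF (K := K) (G j)) ^ a j :=
    Ideal.prod_mem_prod fun j _ => Ideal.pow_mem_pow (X_mem_PF (hg1 j)) _
  have hm2 : m ∈ PF (K := K) F ^ k := h hm
  -- the specialization sending variables in `F` to `X` and the others to `1`
  set φ : MvPolynomial (Fin n) K →ₐ[K] Polynomial K :=
    aeval (fun i => if i ∈ F then (Polynomial.X : Polynomial K) else 1) with hφ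
  have hmapPF : Ideal.map (φ : MvPolynomial (Fin n) K →+* Polynomial K) (PF (K := K) F)
      ≤ Ideal.span {Polynomial.X} := by
    rw [PF, Ideal.map_span]
    refine Ideal.span_mono ?_
    rintro _ ⟨_, ⟨i, hi, rfl⟩, rfl⟩
    simp [hφ, Finset.mem_coe.mp hi]
  have hmem : φ m ∈ Ideal.span ({Polynomial.X} : Set (Polynomial K)) ^ k := by
    have h1 : φ m ∈ Ideal.map (φ : MvPolynomial (Fin n) K →+* Polynomial K)
        (PF (K := K) F ^ k) := Ideal.mem_map_of_mem _ hm2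
    rw [Ideal.map_pow] at h1
    exact Ideal.pow_right_mono hmapPF k h1
  -- compute `φ m`
  have hφm : φ m = Polynomial.X ^ (∑ j ∈ T, a j) := by
    have hTg : ∀ j, j ∈ T ↔ g j ∈ F := by
      intro j; rw [hg2 j]; simp [hT]
    rw [hmdef, map_prod, ← Finset.prod_mul_prod_compl T]
    have h1 : ∏ j ∈ T, φ ((X (g j)) ^ a j) = ∏ j ∈ T, Polynomial.X ^ a j := by
      refine Finset.prod_congr rfl (fun j hj => ?_)
      rw [map_pow, hφ, aeval_X, if_pos ((hTg j).mp hj)]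
    have h2 : ∏ j ∈ Tᶜ, φ ((X (g j)) ^ a j) = 1 := by
      refine Finset.prod_eq_one (fun j hj => ?_)
      rw [Finset.mem_compl] at hj
      rw [map_pow, hφ, aeval_X, if_neg (fun hgF => hj ((hTg j).mpr hgF)), one_pow]
    rw [h1, h2, mul_one, Finset.prod_pow_eq_pow_sum]
  rw [hφm, Ideal.span_singleton_pow, Ideal.mem_span_singleton] at hmem
  have hco := Polynomial.X_pow_dvd_iff.mp hmem (∑ j ∈ T, a j) hk
  rw [Polynomial.coeff_X_pow, if_pos rfl] at hco
  exact one_ne_zero hco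

end Aux

/-- A transversal polymatroidal ideal has a unique presentation as a product of powers of
pairwise distinct monomial prime ideals. -/
theorem stmt6 {K : Type} [Field K] {n s t : ℕ}
    (G : Fin s → Finset (Fin n)) (H : Fin t → Finset (Fin n))
    (a : Fin s → ℕ) (b : Fin t → ℕ)
    (hG : ∀ j, (G j).Nonempty) (hH : ∀ j, (H j).Nonempty)
    (ha : ∀ j, 1 ≤ a j) (hb : ∀ j, 1 ≤ b j)
    (hGinj : Function.Injective G) (hHinj : Function.Injective H)
    (heq : ∏ j, (PF (K := K) (G j)) ^ a j = ∏ j, (PF (K := K) (H j)) ^ b j) :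
    ∃ e : Fin s ≃ Fin t, ∀ j, G j = H (e j) ∧ a j = b (e j) := by
  classical
  set cG : Finset (Fin n) → ℕ := fun F => ∑ j ∈ Finset.univ.filter (fun j => G j ⊆ F), a j
    with hcG
  set cH : Finset (Fin n) → ℕ := fun F => ∑ j ∈ Finset.univ.filter (fun j => H j ⊆ F), b j
    with hcH
  have hc : ∀ F, cG F = cH F := by
    intro F
    refine le_antisymm ?_ ?_
    · exact pow_le_of_prod_le H b hH F (cG F) (heq ▸ prod_le_pow G a F)
    · exact pow_le_of_prod_le G a hG F (cH F) (heq.symm ▸ prod_le_pow H b F)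
  set α : Finset (Fin n) → ℕ := fun F => ∑ j ∈ Finset.univ.filter (fun j => G j = F), a j
    with hα
  set β : Finset (Fin n) → ℕ := fun F => ∑ j ∈ Finset.univ.filter (fun j => H j = F), b j
    with hβ
  have hαsum : ∀ F : Finset (Fin n), ∑ E ∈ F.powerset, α E = cG F := by
    intro F
    rw [hα, hcG, Finset.sum_fiberwise_eq_sum_filter Finset.univ F.powerset G a]
    simp [Finset.mem_powerset]
  have hβsum : ∀ F : Finset (Fin n), ∑ E ∈ F.powerset, β E = cH F := by
    intro F
    rw [hβ, hcH, Finset.sum_fiberwise_eq_sum_filter Finset.univ F.powerset H b]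
    simp [Finset.mem_powerset]
  -- strong induction over subsets gives `α = β`
  have hαβ : ∀ F : Finset (Fin n), α F = β F := by
    intro F
    induction F using Finset.strongInductionOn with
    | _ F ih =>
      have h1 := hαsum F
      have h2 := hβsum F
      rw [← Finset.add_sum_erase _ _ (Finset.mem_powerset_self F)] at h1 h2
      have hrest : ∑ E ∈ F.powerset.erase F, α E = ∑ E ∈ F.powerset.erase F, β E := by
        refine Finset.sum_congr rfl (fun E hE => ?_)
        rw [Finset.mem_erase, Finset.mem_powerset] at hE
        exact ih E (lt_of_le_of_ne hE.2 hE.1)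
      have := h1.trans ((hc F).trans h2.symm)
      rw [hrest] at this
      exact Nat.add_right_cancel this
  have hαG : ∀ j, α (G j) = a j := by
    intro j
    have h1 : Finset.univ.filter (fun i => G i = G j) = {j} := by
      ext i; simp [hGinj.eq_iff]
    show ∑ i ∈ Finset.univ.filter (fun i => G i = G j), a i = a j
    rw [h1, Finset.sum_singleton]
  have hβH : ∀ i, β (H i) = b i := by
    intro i
    have h1 : Finset.univ.filter (fun i' => H i' = H i) = {i} := by
      ext i'; simp [hHinj.eq_iff]
    show ∑ i' ∈ Finset.univ.filter (fun i' => H i' = H i), b i' = b i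
    rw [h1, Finset.sum_singleton]
  have key : ∀ j : Fin s, ∃ i : Fin t, H i = G j ∧ b i = a j := by
    intro j
    have hpos : β (G j) ≠ 0 := by
      rw [← hαβ, hαG]
      exact Nat.one_le_iff_ne_zero.mp (ha j)
    rw [hβ] at hpos
    obtain ⟨i, hi, -⟩ := Finset.exists_ne_zero_of_sum_ne_zero hpos
    rw [Finset.mem_filter] at hi
    refine ⟨i, hi.2, ?_⟩
    rw [← hβH i, hi.2, ← hαβ, hαG]
  have key' : ∀ i : Fin t, ∃ j : Fin s, G j = H i := by
    intro i
    have hpos : α (H i) ≠ 0 := by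
      rw [hαβ, hβH]
      exact Nat.one_le_iff_ne_zero.mp (hb i)
    rw [hα] at hpos
    obtain ⟨j, hj, -⟩ := Finset.exists_ne_zero_of_sum_ne_zero hpos
    rw [Finset.mem_filter] at hj
    exact ⟨j, hj.2⟩
  choose e he1 he2 using key
  choose e' he' using key'
  have hinj : Function.Injective e := by
    intro j j' h
    apply hGinj
    rw [← he1 j, ← he1 j', h]
  have hsurj : Function.Surjective e := by
    intro i
    refine ⟨e' i, hHinj ?_⟩
    rw [he1 (e' i), he' i]
  exact ⟨Equiv.ofBijective e ⟨hinj, hsurj⟩, fun j =>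
    ⟨(he1 j).symm, (he2 j).symm⟩⟩
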